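/- For every s > 0, the second derivative of f at s satisfies f''(s) = −G(s) / ((β+1)·α^β·s²·(1+s)), and in particular f''(s) < 0. -/

import Mathlib

open Real

noncomputable def fFJ (α β : ℝ) (s : ℝ) : ℝ :=
  (1 / ((β + 1) * α ^ β)) * ∫ x in (0:ℝ)..s, ((α + Real.log (1 + x)) ^ (β + 1) - α ^ (β + 1)) / x

noncomputable def GFJ (α β : ℝ) (x : ℝ) : ℝ :=
  (α + Real.log (1 + x)) ^ (β + 1) * (1 + x) - (β + 1) * x * (α + Real.log (1 + x)) ^ β
    - α ^ (β + 1) * (1 + x)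

noncomputable def gFJ (α β : ℝ) (x : ℝ) : ℝ :=
  ((α + Real.log (1 + x)) ^ (β + 1) - α ^ (β + 1)) / x

lemma gFJ_meas (α β : ℝ) : Measurable (gFJ α β) := by
  have h1 : Measurable (fun x : ℝ => α + Real.log (1 + x)) :=
    (Real.measurable_log.comp (measurable_const.add measurable_id)).const_add α
  exact ((h1.pow_const _).sub measurable_const).div measurable_id

lemma log_one_add_nonneg {x : ℝ} (hx : 0 ≤ x) : 0 ≤ Real.log (1 + x) :=
  Real.log_nonneg (by linarith)

-- pointwise bound: for 0 < u ≤ x, 0 ≤ gFJ u ≤ (β+1) * (α + log (1+x))^β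
lemma gFJ_nonneg {α β : ℝ} (hβ : 0 ≤ β) (hα : 0 < α) {u : ℝ} (hu : 0 < u) :
    0 ≤ gFJ α β u := by
  apply div_nonneg _ hu.le
  have h1 : α ≤ α + Real.log (1 + u) := by linarith [log_one_add_nonneg hu.le]
  have := Real.rpow_le_rpow hα.le h1 (by linarith : (0:ℝ) ≤ β + 1)
  linarith

lemma gFJ_le {α β : ℝ} (hβ : 0 ≤ β) (hα : 0 < α) {u x : ℝ} (hu : 0 < u) (hux : u ≤ x) :
    gFJ α β u ≤ (β + 1) * (α + Real.log (1 + x)) ^ β := by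
  have hlu : 0 ≤ Real.log (1 + u) := log_one_add_nonneg hu.le
  set a : ℝ := α + Real.log (1 + u) with ha
  have haα : α ≤ a := by linarith
  have hapos : 0 < a := lt_of_lt_of_le hα haα
  -- Bernoulli: (α/a)^(β+1) ≥ 1 + (β+1)*(α/a - 1)
  have hbern := one_add_mul_self_le_rpow_one_add
    (s := α / a - 1) (by
      have : 0 < α / a := div_pos hα hapos
      linarith) (p := β + 1) (by linarith)
  rw [show (1 : ℝ) + (α / a - 1) = α / a by ring] at hbern
  rw [Real.div_rpow hα.le hapos.le] at hbern
  -- multiply by a^(β+1)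
  have hane : a ^ (β + 1) ≠ 0 := ne_of_gt (Real.rpow_pos_of_pos hapos _)
  have key : a ^ (β + 1) - α ^ (β + 1) ≤ (β + 1) * a ^ β * Real.log (1 + u) := by
    have h2 : (1 + (β + 1) * (α / a - 1)) * a ^ (β + 1) ≤ α ^ (β + 1) := by
      calc (1 + (β + 1) * (α / a - 1)) * a ^ (β + 1)
          ≤ (α ^ (β + 1) / a ^ (β + 1)) * a ^ (β + 1) := by
            apply mul_le_mul_of_nonneg_right hbern (Real.rpow_pos_of_pos hapos _).le
        _ = α ^ (β + 1) := div_mul_cancel₀ _ hane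
    have hab : a ^ (β + 1) = a ^ β * a := by
      rw [Real.rpow_add hapos, Real.rpow_one]
    have h3 : (1 + (β + 1) * (α / a - 1)) * a ^ (β + 1)
        = a ^ (β + 1) - (β + 1) * a ^ β * (a - α) := by
      rw [hab]; field_simp; ring
    have : a - α = Real.log (1 + u) := by simp [ha]
    rw [h3, this] at h2
    linarith
  have hloglt : Real.log (1 + u) ≤ u := by
    have := Real.log_le_sub_one_of_pos (show (0:ℝ) < 1 + u by linarith)
    linarith
  have haβ : a ^ β ≤ (α + Real.log (1 + x)) ^ β := by
    apply Real.rpow_le_rpow hapos.le _ hβ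
    have : Real.log (1 + u) ≤ Real.log (1 + x) :=
      Real.log_le_log (by linarith) (by linarith)
    linarith
  have hM0 : 0 ≤ (β + 1) * a ^ β := by positivity
  calc gFJ α β u = (a ^ (β + 1) - α ^ (β + 1)) / u := rfl
    _ ≤ ((β + 1) * a ^ β * u) / u := by
        gcongr
        calc a ^ (β + 1) - α ^ (β + 1) ≤ (β + 1) * a ^ β * Real.log (1 + u) := key
          _ ≤ (β + 1) * a ^ β * u := mul_le_mul_of_nonneg_left hloglt hM0
    _ = (β + 1) * a ^ β := by field_simp
    _ ≤ (β + 1) * (α + Real.log (1 + x)) ^ β := by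
        apply mul_le_mul_of_nonneg_left haβ (by linarith)

lemma gFJ_intervalIntegrable {α β : ℝ} (hβ : 0 ≤ β) (hα : 0 < α) {x : ℝ} (hx : 0 < x) :
    IntervalIntegrable (gFJ α β) MeasureTheory.volume 0 x := by
  rw [intervalIntegrable_iff]
  apply MeasureTheory.Integrable.mono'
    ((MeasureTheory.integrableOn_const_iff (C := (β + 1) * (α + Real.log (1 + x)) ^ β)).mpr
      (Or.inr (by rw [Set.uIoc_of_le hx.le]; exact measure_Ioc_lt_top)))
  · exact (gFJ_meas α β).aestronglyMeasurable.restrict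
  · rw [Set.uIoc_of_le hx.le]
    filter_upwards [MeasureTheory.ae_restrict_mem measurableSet_Ioc] with u hu
    rw [Real.norm_eq_abs, abs_of_nonneg (gFJ_nonneg hβ hα hu.1)]
    exact gFJ_le hβ hα hu.1 hu.2

lemma gFJ_contAt {α β : ℝ} (hα : 0 < α) {x : ℝ} (hx : 0 < x) :
    ContinuousAt (gFJ α β) x := by
  have h1 : ContinuousAt (fun u : ℝ => α + Real.log (1 + u)) x := by
    apply ContinuousAt.add continuousAt_const
    exact (Real.continuousAt_log (by linarith)).comp (by fun_prop)
  have hpos : 0 < α + Real.log (1 + x) := by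
    have := log_one_add_nonneg hx.le; linarith
  apply ContinuousAt.div
  · apply ContinuousAt.sub _ continuousAt_const
    exact (h1.rpow_const (Or.inl (ne_of_gt hpos)))
  · exact continuousAt_id
  · exact ne_of_gt hx

lemma deriv_fFJ {α β : ℝ} (hβ : 0 ≤ β) (hα : 0 < α) {x : ℝ} (hx : 0 < x) :
    deriv (fFJ α β) x = (1 / ((β + 1) * α ^ β)) * gFJ α β x := by
  have hF : HasDerivAt (fun u => ∫ t in (0:ℝ)..u, gFJ α β t) (gFJ α β x) x :=
    intervalIntegral.integral_hasDerivAt_right (gFJ_intervalIntegrable hβ hα hx)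
      ((gFJ_meas α β).stronglyMeasurable.stronglyMeasurableAtFilter)
      (gFJ_contAt hα hx)
  have : HasDerivAt (fFJ α β) ((1 / ((β + 1) * α ^ β)) * gFJ α β x) x := by
    unfold fFJ
    exact hF.const_mul _
  exact this.deriv

lemma gFJ_hasDerivAt {α β : ℝ} (hβ : 0 ≤ β) (hα : 0 < α) {s : ℝ} (hs : 0 < s) :
    HasDerivAt (gFJ α β)
      (((β + 1) * (α + Real.log (1 + s)) ^ β * (1 / (1 + s)) * s
        - ((α + Real.log (1 + s)) ^ (β + 1) - α ^ (β + 1))) / s ^ 2) s := by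
  have h1s : (0:ℝ) < 1 + s := by linarith
  have hpos : 0 < α + Real.log (1 + s) := by
    have := log_one_add_nonneg hs.le; linarith
  have h1 : HasDerivAt (fun u : ℝ => 1 + u) 1 s := by
    simpa using (hasDerivAt_id s).const_add 1
  have h2 : HasDerivAt (fun u : ℝ => α + Real.log (1 + u)) (1 / (1 + s)) s := by
    have := (h1.log (ne_of_gt h1s)).const_add α
    simpa [one_div] using this
  have h3 : HasDerivAt (fun u : ℝ => (α + Real.log (1 + u)) ^ (β + 1))
      ((β + 1) * (α + Real.log (1 + s)) ^ β * (1 / (1 + s))) s := by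
    have := h2.rpow_const (p := β + 1) (Or.inl (ne_of_gt hpos))
    convert this using 1
    all_goals ring_nf
  have h4 : HasDerivAt (fun u : ℝ => (α + Real.log (1 + u)) ^ (β + 1) - α ^ (β + 1))
      ((β + 1) * (α + Real.log (1 + s)) ^ β * (1 / (1 + s))) s := h3.sub_const _
  have h5 := h4.div (hasDerivAt_id s) (ne_of_gt hs)
  convert h5 using 1
  all_goals first | (ext u; simp [gFJ]) | simp

-- the auxiliary function for positivity of GFJ
noncomputable def HFJ (α β : ℝ) (t : ℝ) : ℝ :=
  (α + t) ^ (β + 1) - α ^ (β + 1) - (β + 1) * (α + t) ^ β * (1 - Real.exp (-t))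

lemma HFJ_hasDerivAt {α β : ℝ} (hβ : 0 ≤ β) (hα : 0 < α) {t : ℝ} (ht : 0 ≤ t) :
    HasDerivAt (HFJ α β)
      ((β + 1) * (1 - Real.exp (-t)) * (α + t) ^ (β - 1) * (α + t - β)) t := by
  have hpos : 0 < α + t := by linarith
  have h0 : HasDerivAt (fun u : ℝ => α + u) 1 t := by
    simpa using (hasDerivAt_id t).const_add α
  have h1 : HasDerivAt (fun u : ℝ => (α + u) ^ (β + 1)) ((β + 1) * (α + t) ^ β) t := by
    have := h0.rpow_const (p := β + 1) (Or.inl (ne_of_gt hpos))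
    simpa using this
  have h2 : HasDerivAt (fun u : ℝ => (α + u) ^ β) (β * (α + t) ^ (β - 1)) t := by
    have := h0.rpow_const (p := β) (Or.inl (ne_of_gt hpos))
    simpa using this
  have h3 : HasDerivAt (fun u : ℝ => 1 - Real.exp (-u)) (Real.exp (-t)) t := by
    have := ((hasDerivAt_neg t).exp).const_sub 1
    simpa using this
  have h4 : HasDerivAt (fun u : ℝ => (β + 1) * (α + u) ^ β * (1 - Real.exp (-u)))
      ((β + 1) * (β * (α + t) ^ (β - 1)) * (1 - Real.exp (-t))
        + (β + 1) * (α + t) ^ β * Real.exp (-t)) t := by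
    have := ((h2.const_mul (β + 1)).mul h3)
    convert this using 1
    all_goals first | rfl | ring
  have h5 := (h1.sub_const (α ^ (β + 1))).sub h4
  convert h5 using 1 <;> try rfl
  have hsplit : (α + t) ^ β = (α + t) ^ (β - 1) * (α + t) := by
    rw [← Real.rpow_add_one (ne_of_gt hpos)]
    ring_nf
  rw [hsplit]
  ring

lemma HFJ_pos {α β : ℝ} (hβ : 0 ≤ β) (hαβ : β < α) {t : ℝ} (ht : 0 < t) :
    0 < HFJ α β t := by
  have hα : 0 < α := lt_of_le_of_lt hβ hαβ
  have hmono : StrictMonoOn (HFJ α β) (Set.Ici 0) := by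
    apply strictMonoOn_of_deriv_pos (convex_Ici 0)
    · intro u hu
      exact ((HFJ_hasDerivAt hβ hα hu).continuousAt).continuousWithinAt
    · intro u hu
      rw [interior_Ici] at hu
      rw [(HFJ_hasDerivAt hβ hα (le_of_lt hu)).deriv]
      simp only [Set.mem_Ioi] at hu
      have h1 : 0 < 1 - Real.exp (-u) := by
        have : Real.exp (-u) < 1 := by
          rw [Real.exp_lt_one_iff]; linarith
        linarith
      have h2 : 0 < (α + u) ^ (β - 1) := Real.rpow_pos_of_pos (by linarith) _
      have h3 : 0 < α + u - β := by linarith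
      positivity
  have h0 : HFJ α β 0 = 0 := by
    simp [HFJ]
  have := hmono (Set.mem_Ici.mpr le_rfl) (Set.mem_Ici.mpr ht.le) ht
  linarith

lemma GFJ_pos {α β : ℝ} (hβ : 0 ≤ β) (hαβ : β < α) {s : ℝ} (hs : 0 < s) :
    0 < GFJ α β s := by
  have h1s : (0:ℝ) < 1 + s := by linarith
  have hlog : 0 < Real.log (1 + s) := Real.log_pos (by linarith)
  have hH := HFJ_pos hβ hαβ hlog
  have hexp : Real.exp (-Real.log (1 + s)) = (1 + s)⁻¹ := by
    rw [Real.exp_neg, Real.exp_log h1s]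
  have key : GFJ α β s = (1 + s) * HFJ α β (Real.log (1 + s)) := by
    unfold GFJ HFJ
    rw [hexp]
    field_simp
    ring
  rw [key]
  positivity

theorem stmt_5 (α β : ℝ) (hβ : 0 ≤ β) (hαβ : β < α) (s : ℝ) (hs : 0 < s) :
    deriv (deriv (fFJ α β)) s = -GFJ α β s / ((β + 1) * α ^ β * s ^ 2 * (1 + s)) ∧
    deriv (deriv (fFJ α β)) s < 0 := by
  have hα : 0 < α := lt_of_le_of_lt hβ hαβ
  have h1s : (0:ℝ) < 1 + s := by linarith
  have heq : deriv (fFJ α β) =ᶠ[nhds s] (fun u => (1 / ((β + 1) * α ^ β)) * gFJ α β u) := by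
    filter_upwards [Ioi_mem_nhds hs] with u hu
    exact deriv_fFJ hβ hα hu
  have hg := gFJ_hasDerivAt hβ hα hs
  have hder : deriv (deriv (fFJ α β)) s
      = (1 / ((β + 1) * α ^ β)) *
        (((β + 1) * (α + Real.log (1 + s)) ^ β * (1 / (1 + s)) * s
          - ((α + Real.log (1 + s)) ^ (β + 1) - α ^ (β + 1))) / s ^ 2) := by
    rw [heq.deriv_eq]
    exact (hg.const_mul _).deriv
  have hmain : deriv (deriv (fFJ α β)) s
      = -GFJ α β s / ((β + 1) * α ^ β * s ^ 2 * (1 + s)) := by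
    rw [hder]
    unfold GFJ
    have hβ1 : (β : ℝ) + 1 ≠ 0 := by linarith
    have hαβ' : (α:ℝ) ^ β ≠ 0 := ne_of_gt (Real.rpow_pos_of_pos hα _)
    have hsne : s ≠ 0 := ne_of_gt hs
    have h1sne : (1:ℝ) + s ≠ 0 := ne_of_gt h1s
    field_simp
    ring
  refine ⟨hmain, ?_⟩
  rw [hmain]
  have hG := GFJ_pos hβ hαβ hs
  have hD : 0 < (β + 1) * α ^ β * s ^ 2 * (1 + s) := by
    have := Real.rpow_pos_of_pos hα β
    positivity
  exact div_neg_of_neg_of_pos (by linarith) hD
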